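/- arXiv:1110.1852 — 7 statements merged into one kernel-verified Lean document; each statement's English description precedes it below -/
import Mathlib

section
/- Let L/K be a finite Galois extension with abelian Galois group G. An element x ∈ L is normal in L/K (i.e., its Galois conjugates form a K-basis of L) if and only if for every character χ : G → ℂ× (equivalently, into K̄×), the sum ∑_{γ ∈ G} χ(γ⁻¹) x^γ is nonzero. -/
noncomputable section

open Module

/-- `x` is a normal element of `L/K`: its Galois conjugates form a `K`-basis of `L`. -/
def IsNormalElement (K : Type*) {L : Type*} [Field K] [Field L] [Algebra K L] (x : L) : Prop :=
  Submodule.span K (Set.range fun γ : L ≃ₐ[K] L => γ x) = ⊤ ∧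
    LinearIndependent K fun γ : L ≃ₐ[K] L => γ x



lemma exists_common_eigenvector {Ω V ι : Type*} [Field Ω] [IsAlgClosed Ω]
    [AddCommGroup V] [Module Ω V] [FiniteDimensional Ω V]
    (T : ι → Module.End Ω V) (hcomm : ∀ i j, Commute (T i) (T j)) :
    ∀ (n : ℕ) (W : Submodule Ω V), finrank Ω W = n → W ≠ ⊥ →
      (∀ i, W.map (T i) ≤ W) →
      ∃ f ∈ W, f ≠ 0 ∧ ∀ i, ∃ c : Ω, T i f = c • f := by
  intro n
  induction n using Nat.strong_induction_on with
  | _ n ih =>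
    intro W hrank hW hinv
    by_cases hcase : ∃ (i : ι) (c : Ω), W ⊓ LinearMap.ker (T i - c • 1) ≠ ⊥ ∧
        W ⊓ LinearMap.ker (T i - c • 1) ≠ W
    · obtain ⟨i, c, hne, hne'⟩ := hcase
      set E := W ⊓ LinearMap.ker (T i - c • 1) with hE
      have hEW : E < W := lt_of_le_of_ne inf_le_left hne'
      have hmemE : ∀ f, f ∈ E ↔ f ∈ W ∧ T i f = c • f := by
        intro f
        simp only [hE, Submodule.mem_inf, LinearMap.mem_ker, LinearMap.sub_apply,
          LinearMap.smul_apply, Module.End.one_apply, sub_eq_zero]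
      have hEinv : ∀ j, E.map (T j) ≤ E := by
        intro j
        rintro _ ⟨f, hf, rfl⟩
        obtain ⟨hfW, hfi⟩ := (hmemE f).1 hf
        refine (hmemE _).2 ⟨hinv j ⟨f, hfW, rfl⟩, ?_⟩
        have : T i (T j f) = T j (T i f) := by
          have := (hcomm i j).eq
          calc T i (T j f) = (T i * T j) f := rfl
            _ = (T j * T i) f := by rw [this]
            _ = T j (T i f) := rfl
        rw [this, hfi, map_smul]
      obtain ⟨f, hfE, hf0, hfe⟩ := ih (finrank Ω E)
        (hrank ▸ Submodule.finrank_lt_finrank_of_lt hEW) E rfl hne hEinv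
      exact ⟨f, hEW.le hfE, hf0, hfe⟩
    · push_neg at hcase
      obtain ⟨f, hfW, hf0⟩ := Submodule.exists_mem_ne_zero_of_ne_bot hW
      refine ⟨f, hfW, hf0, fun i => ?_⟩
      haveI : Nontrivial W := Submodule.nontrivial_iff_ne_bot.mpr hW
      have hres : ∀ u, u ∈ W → T i u ∈ W := fun u hu => hinv i ⟨u, hu, rfl⟩
      let S : Module.End Ω W := (T i).restrict hres
      obtain ⟨c, hc⟩ := Module.End.exists_eigenvalue S
      obtain ⟨u, hu⟩ := hc.exists_hasEigenvector
      have huV : T i (u : V) = c • (u : V) := by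
        have := hu.apply_eq_smul
        have h2 : ((S u : W) : V) = T i (u : V) := rfl
        rw [this] at h2
        simpa using h2.symm
      have hmem : (u : V) ∈ W ⊓ LinearMap.ker (T i - c • 1) := by
        refine ⟨u.2, ?_⟩
        rw [SetLike.mem_coe, LinearMap.mem_ker, LinearMap.sub_apply, LinearMap.smul_apply,
          Module.End.one_apply, sub_eq_zero, huV]
      have hbot : W ⊓ LinearMap.ker (T i - c • 1) ≠ ⊥ := by
        intro h
        apply hu.right
        have := h ▸ hmem
        simpa [Submodule.mem_bot] using Subtype.coe_injective (by simpa using this)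
      have heq := hcase i c hbot
      have hfmem : f ∈ W ⊓ LinearMap.ker (T i - c • 1) := by rw [heq]; exact hfW
      refine ⟨c, ?_⟩
      have h2 := hfmem.2
      rw [SetLike.mem_coe, LinearMap.mem_ker, LinearMap.sub_apply, LinearMap.smul_apply,
        Module.End.one_apply, sub_eq_zero] at h2
      exact h2


set_option maxHeartbeats 2000000 in
theorem normal_iff_character_sums_ne_zero
    {K L : Type*} [Field K] [Field L] [Algebra K L]
    [FiniteDimensional K L] [IsGalois K L]
    (hab : ∀ γ δ : L ≃ₐ[K] L, γ * δ = δ * γ) (x : L) :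
    IsNormalElement K x ↔
      ∀ χ : (L ≃ₐ[K] L) →* (AlgebraicClosure L)ˣ,
        ∑ γ : L ≃ₐ[K] L,
          (χ γ⁻¹ : AlgebraicClosure L) * algebraMap L (AlgebraicClosure L) (γ x) ≠ 0 := by
  classical
  let σ : L →ₗ[K] (AlgebraicClosure L) := (IsScalarTower.toAlgHom K L (AlgebraicClosure L)).toLinearMap
  let em : (L ≃ₐ[K] L) → (L →ₗ[K] (AlgebraicClosure L)) := fun γ => σ.comp γ.toLinearMap
  have hem : ∀ (γ : L ≃ₐ[K] L) (y : L), em γ y = algebraMap L (AlgebraicClosure L) (γ y) := fun γ y => rfl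
  have hli : LinearIndependent (AlgebraicClosure L) em := by
    let mh : (L ≃ₐ[K] L) → (L →* (AlgebraicClosure L)) := fun γ =>
      ((algebraMap L (AlgebraicClosure L)).comp (γ : L →+* L)).toMonoidHom
    have hmh_inj : Function.Injective mh := by
      intro γ δ h
      ext y
      have : algebraMap L (AlgebraicClosure L) (γ y) = algebraMap L (AlgebraicClosure L) (δ y) := by
        have := DFunLike.congr_fun h y
        simpa [mh] using this
      exact (algebraMap L (AlgebraicClosure L)).injective this
    have h1 : LinearIndependent (AlgebraicClosure L) (fun γ : (L ≃ₐ[K] L) => ⇑(mh γ)) :=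
      (linearIndependent_monoidHom L (AlgebraicClosure L)).comp mh hmh_inj
    let ℓ : (L →ₗ[K] (AlgebraicClosure L)) →ₗ[(AlgebraicClosure L)] (L → (AlgebraicClosure L)) :=
      { toFun := fun f => ⇑f
        map_add' := fun f g => rfl
        map_smul' := fun c f => rfl }
    have hcomp : (fun γ : (L ≃ₐ[K] L) => ℓ (em γ)) = fun γ : (L ≃ₐ[K] L) => ⇑(mh γ) := by
      funext γ
      funext y
      rfl
    exact LinearIndependent.of_comp ℓ (by rw [hcomp] at *; exact h1)

  constructor
  · intro hnorm χ
    intro hS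
    have hT : ∑ γ : (L ≃ₐ[K] L), (χ γ⁻¹ : (AlgebraicClosure L)) • em γ = 0 := by
      apply LinearMap.ext
      intro y
      rw [LinearMap.zero_apply]
      have hy : y ∈ (⊤ : Submodule K L) := trivial
      rw [← hnorm.1] at hy
      induction hy using Submodule.span_induction with
      | mem z hz =>
        obtain ⟨γ', rfl⟩ := hz
        rw [LinearMap.sum_apply]
        have : ∀ γ : (L ≃ₐ[K] L), ((χ γ⁻¹ : (AlgebraicClosure L)) • em γ) (γ' x)
            = (χ γ⁻¹ : (AlgebraicClosure L)) * algebraMap L (AlgebraicClosure L) ((γ * γ') x) := by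
          intro γ
          rw [LinearMap.smul_apply, smul_eq_mul, hem]
          rfl
        rw [Finset.sum_congr rfl fun γ _ => this γ]
        rw [Fintype.sum_equiv (Equiv.mulRight γ')
          (fun γ => (χ γ⁻¹ : (AlgebraicClosure L)) * algebraMap L (AlgebraicClosure L) ((γ * γ') x))
          (fun δ => (χ γ' : (AlgebraicClosure L)) * ((χ δ⁻¹ : (AlgebraicClosure L)) * algebraMap L (AlgebraicClosure L) (δ x))) ?_]
        · rw [← Finset.mul_sum, hS, mul_zero]
        · intro δ
          simp only [Equiv.coe_mulRight]
          rw [mul_inv_rev, map_mul, map_inv]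
          push_cast
          have : ((χ γ' : (AlgebraicClosure L))) ≠ 0 := Units.ne_zero _
          field_simp
          rw [mul_assoc, ← Units.val_mul, ← map_mul, mul_inv_cancel, map_one, Units.val_one, mul_one]
      | zero => simp
      | add a b _ _ ha hb => rw [map_add, ha, hb, add_zero]
      | smul c a _ ha => rw [map_smul, ha, smul_zero]
    have := Fintype.linearIndependent_iff.mp hli (fun γ => (χ γ⁻¹ : (AlgebraicClosure L))) hT 1
    simp at this

  · intro hsum
    let b := Module.finBasis K L
    haveI hfd : FiniteDimensional (AlgebraicClosure L) (L →ₗ[K] (AlgebraicClosure L)) := Module.Finite.equiv (b.constr (AlgebraicClosure L))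
    have hrankV : finrank (AlgebraicClosure L) (L →ₗ[K] (AlgebraicClosure L)) = finrank K L := by
      rw [← (b.constr (AlgebraicClosure L) (M' := (AlgebraicClosure L))).finrank_eq, finrank_pi]
      simp
    have hcard : Fintype.card (L ≃ₐ[K] L) = finrank (AlgebraicClosure L) (L →ₗ[K] (AlgebraicClosure L)) := by
      rw [hrankV, ← Nat.card_eq_fintype_card, IsGalois.card_aut_eq_finrank]
    -- It suffices to prove the span condition
    have hspan : Submodule.span K (Set.range fun γ : (L ≃ₐ[K] L) => γ x) = ⊤ := by
      by_contra hp
      -- a nonzero functional vanishing on the span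
      obtain ⟨φ, hφ0, hφmap⟩ := Submodule.exists_dual_map_eq_bot_of_lt_top
        (lt_top_iff_ne_top.mpr hp) inferInstance
      have hφ : ∀ γ : (L ≃ₐ[K] L), φ (γ x) = 0 := by
        intro γ
        have hmem : γ x ∈ Submodule.span K (Set.range fun γ : (L ≃ₐ[K] L) => γ x) :=
          Submodule.subset_span ⟨γ, rfl⟩
        have : φ (γ x) ∈ Submodule.map φ (Submodule.span K (Set.range fun γ : (L ≃ₐ[K] L) => γ x)) :=
          ⟨γ x, hmem, rfl⟩
        rw [hφmap] at this
        exact (Submodule.mem_bot K).mp this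
      -- the subspace of functionals vanishing on all conjugates of x
      let W : Submodule (AlgebraicClosure L) (L →ₗ[K] (AlgebraicClosure L)) :=
        { carrier := {f | ∀ γ : (L ≃ₐ[K] L), f (γ x) = 0}
          add_mem' := fun hf hg γ => by
            rw [LinearMap.add_apply, hf γ, hg γ, add_zero]
          zero_mem' := fun γ => rfl
          smul_mem' := fun c f hf γ => by
            rw [LinearMap.smul_apply, hf γ, smul_zero] }
      have hmemW : ∀ f : L →ₗ[K] (AlgebraicClosure L), f ∈ W ↔ ∀ γ : (L ≃ₐ[K] L), f (γ x) = 0 := fun f => Iff.rfl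
      -- the G-action by precomposition
      let T : (L ≃ₐ[K] L) → Module.End (AlgebraicClosure L) (L →ₗ[K] (AlgebraicClosure L)) := fun γ =>
        { toFun := fun f => f.comp γ.toLinearMap
          map_add' := fun f g => rfl
          map_smul' := fun c f => rfl }
      have hT : ∀ (γ : (L ≃ₐ[K] L)) (f : L →ₗ[K] (AlgebraicClosure L)) (y : L), (T γ f) y = f (γ y) := fun γ f y => rfl
      have hTmul : ∀ (γ δ : (L ≃ₐ[K] L)) (f : L →ₗ[K] (AlgebraicClosure L)), T γ (T δ f) = T (δ * γ) f := by
        intro γ δ f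
        apply LinearMap.ext
        intro y
        rfl
      have hcomm : ∀ γ δ : (L ≃ₐ[K] L), Commute (T γ) (T δ) := by
        intro γ δ
        apply LinearMap.ext
        intro f
        show T γ (T δ f) = T δ (T γ f)
        rw [hTmul, hTmul, hab]
      -- W is nonzero
      have hWne : W ≠ ⊥ := by
        intro hbot
        let f0 : L →ₗ[K] (AlgebraicClosure L) := (Algebra.linearMap K (AlgebraicClosure L)).comp φ
        have hf0W : f0 ∈ W := by
          rw [hmemW]
          intro γ
          show algebraMap K (AlgebraicClosure L) (φ (γ x)) = 0
          rw [hφ γ, map_zero]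
        rw [hbot, Submodule.mem_bot] at hf0W
        obtain ⟨y, hy⟩ := DFunLike.ne_iff.mp hφ0
        have h2 : algebraMap K (AlgebraicClosure L) (φ y) = 0 := by
          show f0 y = 0
          rw [hf0W]; rfl
        refine hy ?_
        show φ y = 0
        apply (algebraMap K (AlgebraicClosure L)).injective
        rw [h2, map_zero]
      -- W is invariant
      have hWinv : ∀ γ : (L ≃ₐ[K] L), W.map (T γ) ≤ W := by
        intro γ
        rintro _ ⟨f, hf, rfl⟩
        have hf' : ∀ δ : (L ≃ₐ[K] L), f (δ x) = 0 := hf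
        rw [hmemW]
        intro δ
        rw [hT]
        have : γ (δ x) = (γ * δ) x := rfl
        rw [this, hf' (γ * δ)]
      -- common eigenvector
      obtain ⟨f, hfW, hf0, hfe⟩ := exists_common_eigenvector T hcomm
        (finrank (AlgebraicClosure L) W) W rfl hWne hWinv
      -- eigenvalues
      choose c hc using hfe
      have hcanc : ∀ a b : (AlgebraicClosure L), a • f = b • f → a = b := by
        intro a b h
        by_contra hne
        apply hf0
        have : (a - b) • f = 0 := by
          ext y
          have := LinearMap.congr_fun h y
          simp only [LinearMap.smul_apply, LinearMap.zero_apply, sub_smul] at this ⊢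
          rw [this, sub_self]
        rcases smul_eq_zero.mp this with h1 | h1
        · exact absurd (sub_eq_zero.mp h1) hne
        · exact absurd h1 hf0
      have hc1 : c 1 = 1 := by
        apply hcanc
        rw [← hc 1, one_smul]
        apply LinearMap.ext
        intro y
        rw [hT]
        norm_num
      have hcmul : ∀ γ δ : (L ≃ₐ[K] L), c (γ * δ) = c γ * c δ := by
        intro γ δ
        apply hcanc
        rw [← hc (γ * δ), ← hTmul δ γ, hc γ, map_smul, hc δ, smul_smul]
      have hcne : ∀ γ : (L ≃ₐ[K] L), c γ ≠ 0 := by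
        intro γ hzero
        apply hf0
        have h1 : T γ f = 0 := by rw [hc γ, hzero, zero_smul]
        apply LinearMap.ext
        intro y
        have h2 : γ (γ⁻¹ y) = y := by
          rw [← AlgEquiv.mul_apply, mul_inv_cancel, AlgEquiv.one_apply]
        calc f y = f (γ (γ⁻¹ y)) := by rw [h2]
          _ = (T γ f) (γ⁻¹ y) := rfl
          _ = 0 := by rw [h1]; rfl
      -- assemble the character
      let χ : (L ≃ₐ[K] L) →* (AlgebraicClosure L)ˣ :=
        { toFun := fun γ => Units.mk0 (c γ) (hcne γ)
          map_one' := Units.ext hc1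
          map_mul' := fun γ δ => Units.ext (hcmul γ δ) }
      -- expand f in the basis of embeddings
      let B := basisOfLinearIndependentOfCardEqFinrank hli hcard
      have hB : ∀ γ : (L ≃ₐ[K] L), B γ = em γ := fun γ => by
        rw [coe_basisOfLinearIndependentOfCardEqFinrank]
      let d : (L ≃ₐ[K] L) → (AlgebraicClosure L) := fun γ => B.repr f γ
      have hfsum : ∑ γ : (L ≃ₐ[K] L), d γ • em γ = f := by
        conv_rhs => rw [← B.sum_repr f]
        exact Finset.sum_congr rfl fun γ _ => by rw [hB]
      -- coefficient recursion
      have hrec : ∀ δ η : (L ≃ₐ[K] L), d (η * δ⁻¹) = c δ * d η := by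
        intro δ η
        have h1 : T δ f = ∑ γ : (L ≃ₐ[K] L), d γ • em (γ * δ) := by
          rw [← hfsum, map_sum]
          refine Finset.sum_congr rfl fun γ _ => ?_
          rw [map_smul]
          congr 1
        have h2 : ∑ γ : (L ≃ₐ[K] L), d γ • em (γ * δ) = ∑ γ : (L ≃ₐ[K] L), d (γ * δ⁻¹) • em γ := by
          refine Fintype.sum_equiv (Equiv.mulRight δ) _ _ fun γ => ?_
          simp only [Equiv.coe_mulRight]
          congr 2
          group
        have h3 : T δ f = ∑ γ : (L ≃ₐ[K] L), (c δ * d γ) • em γ := by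
          rw [hc δ, ← hfsum, Finset.smul_sum]
          exact Finset.sum_congr rfl fun γ _ => by rw [smul_smul]
        have h4 : ∑ γ : (L ≃ₐ[K] L), (d (γ * δ⁻¹) - c δ * d γ) • em γ = 0 := by
          rw [Finset.sum_congr rfl fun γ _ => sub_smul (d (γ * δ⁻¹)) (c δ * d γ) (em γ),
            Finset.sum_sub_distrib, ← h2, ← h1, h3, sub_self]
        have := Fintype.linearIndependent_iff.mp hli _ h4 η
        exact sub_eq_zero.mp this
      have hd : ∀ γ : (L ≃ₐ[K] L), d γ = (c γ)⁻¹ * d 1 := by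
        intro γ
        have h5 := hrec γ γ
        rw [mul_inv_cancel] at h5
        rw [h5, inv_mul_cancel_left₀ (hcne γ)]
      have hd1 : d 1 ≠ 0 := by
        intro h0
        apply hf0
        rw [← hfsum]
        refine Finset.sum_eq_zero fun γ _ => ?_
        rw [hd γ, h0, mul_zero, zero_smul]
      -- evaluate at x
      apply hsum χ
      have hfx : f x = 0 := by
        have := (hmemW f).mp hfW 1
        rwa [AlgEquiv.one_apply] at this
      have hexp : f x = d 1 * ∑ γ : (L ≃ₐ[K] L), (χ γ⁻¹ : (AlgebraicClosure L)) * algebraMap L (AlgebraicClosure L) (γ x) := by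
        rw [← hfsum, LinearMap.sum_apply, Finset.mul_sum]
        refine Finset.sum_congr rfl fun γ _ => ?_
        rw [LinearMap.smul_apply, smul_eq_mul, hem, hd γ]
        have : (χ γ⁻¹ : (AlgebraicClosure L)) = (c γ)⁻¹ := by
          show ((χ γ⁻¹ : (AlgebraicClosure L)ˣ) : (AlgebraicClosure L)) = (c γ)⁻¹
          rw [map_inv]
          simp [χ]
        rw [this]
        ring
      rw [hfx] at hexp
      rcases mul_eq_zero.mp hexp.symm with h | h
      · exact absurd h hd1
      · exact h
    refine ⟨hspan, ?_⟩
    exact linearIndependent_of_top_le_span_of_card_eq_finrank (le_of_eq hspan.symm)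
      (by rw [← Nat.card_eq_fintype_card, IsGalois.card_aut_eq_finrank])
end
end

section
/- Let L/K be a finite abelian extension of degree n ≥ 2 with Galois group G, and let |·| be an absolute value (valuation satisfying the triangle inequality) on L. Suppose x ∈ L satisfies |x^γ / x| < 1 for all γ ∈ G \ {Id}, and m is a positive integer with |x^γ / x|^m ≤ 1/n for all γ ∈ G \ {Id}. Then x^m is completely normal in L/K, i.e., for every intermediate field F of L/K, the conjugates of x^m under Gal(L/F) form an F-basis of L. -/
noncomputable section

/-- `x` is completely normal in `L/K`: it is normal over every intermediate field. -/
def IsCompletelyNormal (K : Type*) {L : Type*} [Field K] [Field L] [Algebra K L] (x : L) : Prop :=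
  ∀ F : IntermediateField K L, IsNormalElement F x

theorem pow_completelyNormal_of_abs_lt
    {K L : Type*} [Field K] [Field L] [Algebra K L]
    [FiniteDimensional K L] [IsGalois K L]
    (hn : 2 ≤ Module.finrank K L)
    (hab : ∀ γ δ : L ≃ₐ[K] L, γ * δ = δ * γ)
    (v : AbsoluteValue L ℝ) (x : L) (hx : x ≠ 0)
    (h1 : ∀ γ : L ≃ₐ[K] L, γ ≠ 1 → v (γ x / x) < 1)
    (m : ℕ) (hm : 0 < m)
    (h2 : ∀ γ : L ≃ₐ[K] L, γ ≠ 1 → v (γ x / x) ^ m ≤ 1 / (Module.finrank K L : ℝ)) :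
    IsCompletelyNormal K (x ^ m) := by
  intro F
  have hy : x ^ m ≠ 0 := pow_ne_zero m hx
  have hvy : 0 < v (x ^ m) := v.pos hy
  have hn0 : (0 : ℝ) < (Module.finrank K L : ℝ) := by
    have : 0 < Module.finrank K L := lt_of_lt_of_le (by norm_num) hn
    exact_mod_cast this
  -- key bound on conjugates of `x ^ m` over `F`
  have key : ∀ σ : L ≃ₐ[F] L, σ ≠ 1 →
      v (σ (x ^ m)) ≤ v (x ^ m) / (Module.finrank K L : ℝ) := by
    intro σ hσ
    have hres : (σ.restrictScalars K) ≠ 1 := by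
      intro h
      apply hσ
      ext a
      have := congrArg (fun f : L ≃ₐ[K] L => f a) h
      simpa using this
    have h2' := h2 (σ.restrictScalars K) hres
    have hσx : (σ.restrictScalars K) x = σ x := rfl
    rw [hσx] at h2'
    have hvx : 0 < v x := v.pos hx
    have hdiv : v (σ x / x) = v (σ x) / v x := map_div₀ v _ _
    rw [hdiv, div_pow] at h2'
    have hσpow : σ (x ^ m) = (σ x) ^ m := map_pow σ x m
    rw [hσpow, v.map_pow, v.map_pow] at *
    rw [div_le_div_iff₀ (by positivity) hn0] at h2'
    rw [le_div_iff₀ hn0]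
    linarith
  have card_le : (Fintype.card (L ≃ₐ[F] L) : ℝ) ≤ (Module.finrank K L : ℝ) := by
    have h1' : Fintype.card (L ≃ₐ[F] L) = Module.finrank F L :=
      Nat.card_eq_fintype_card.symm.trans (IsGalois.card_aut_eq_finrank F L)
    have h2' : Module.finrank F L ≤ Module.finrank K L := by
      have := Module.finrank_mul_finrank K F L
      have hpos : 0 < Module.finrank K F := Module.finrank_pos
      nlinarith [this, hpos]
    exact_mod_cast h1'.le.trans h2'
  -- linear independence of the conjugates over `F`
  have hli : LinearIndependent F fun σ : L ≃ₐ[F] L => σ (x ^ m) := by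
    classical
    rw [Fintype.linearIndependent_iff]
    intro g hg
    by_contra hcon
    push_neg at hcon
    obtain ⟨σ0, hσ0⟩ := hcon
    obtain ⟨σ1, hσ1⟩ := Finite.exists_max fun σ : L ≃ₐ[F] L =>
      v (algebraMap F L (g σ))
    have hgσ1 : g σ1 ≠ 0 := by
      intro h
      apply hσ0
      have h0 := hσ1 σ0
      rw [h, map_zero, v.map_zero] at h0
      have : v (algebraMap F L (g σ0)) = 0 := le_antisymm h0 (v.nonneg _)
      have : algebraMap F L (g σ0) = 0 := by
        by_contra hne
        exact absurd this (ne_of_gt (v.pos hne))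
      exact (map_eq_zero_iff _ (algebraMap (↥F) L).injective).mp this
    have hvg1 : 0 < v (algebraMap F L (g σ1)) := by
      apply v.pos
      simpa using (map_ne_zero_iff _ (algebraMap (↥F) L).injective).mpr hgσ1
    -- shift the relation so that the maximal coefficient sits at `1`
    have hrel : ∑ σ : L ≃ₐ[F] L, g (σ1 * σ) • σ (x ^ m) = 0 := by
      have h0 : σ1⁻¹ (∑ σ : L ≃ₐ[F] L, g σ • σ (x ^ m)) = 0 := by
        rw [hg, map_zero]
      rw [map_sum] at h0
      have h1' : ∀ σ : L ≃ₐ[F] L, σ1⁻¹ (g σ • σ (x ^ m)) = g σ • (σ1⁻¹ * σ) (x ^ m) := by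
        intro σ
        rw [map_smul]
        rfl
      rw [Finset.sum_congr rfl fun σ _ => h1' σ] at h0
      rw [← h0]
      exact Fintype.sum_equiv (Equiv.mulLeft σ1) _ _ (by
        intro σ
        simp [Equiv.mulLeft, ← mul_assoc])
    have hsplit : g σ1 • (x ^ m) +
        ∑ σ ∈ Finset.univ.erase (1 : L ≃ₐ[F] L), g (σ1 * σ) • σ (x ^ m) = 0 := by
      rw [← hrel]
      rw [← Finset.add_sum_erase Finset.univ _ (Finset.mem_univ (1 : L ≃ₐ[F] L))]
      simp
    have heq : g σ1 • (x ^ m) =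
        -∑ σ ∈ Finset.univ.erase (1 : L ≃ₐ[F] L), g (σ1 * σ) • σ (x ^ m) :=
      eq_neg_of_add_eq_zero_left hsplit
    have hcard1 : 1 ≤ (Fintype.card (L ≃ₐ[F] L) : ℝ) := by
      have : 0 < Fintype.card (L ≃ₐ[F] L) := Fintype.card_pos
      exact_mod_cast this
    have hbound : v (algebraMap F L (g σ1)) * v (x ^ m) ≤
        ((Fintype.card (L ≃ₐ[F] L) : ℝ) - 1) *
          (v (algebraMap F L (g σ1)) * (v (x ^ m) / (Module.finrank K L : ℝ))) := by
      have e1 : v (algebraMap F L (g σ1)) * v (x ^ m) = v (g σ1 • (x ^ m)) := by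
        rw [Algebra.smul_def, v.map_mul]
      rw [e1, heq, v.map_neg]
      calc v (∑ σ ∈ Finset.univ.erase (1 : L ≃ₐ[F] L), g (σ1 * σ) • σ (x ^ m))
          ≤ ∑ σ ∈ Finset.univ.erase (1 : L ≃ₐ[F] L), v (g (σ1 * σ) • σ (x ^ m)) :=
            v.sum_le _ _
        _ ≤ ∑ _σ ∈ Finset.univ.erase (1 : L ≃ₐ[F] L),
              v (algebraMap F L (g σ1)) * (v (x ^ m) / (Module.finrank K L : ℝ)) := by
            apply Finset.sum_le_sum
            intro σ hσ
            have hσ1' : σ ≠ 1 := Finset.ne_of_mem_erase hσ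
            rw [Algebra.smul_def, v.map_mul]
            exact mul_le_mul (hσ1 _) (key σ hσ1') (v.nonneg _) (le_of_lt hvg1)
        _ = ((Fintype.card (L ≃ₐ[F] L) : ℝ) - 1) *
              (v (algebraMap F L (g σ1)) * (v (x ^ m) / (Module.finrank K L : ℝ))) := by
            rw [Finset.sum_const, nsmul_eq_mul,
              Finset.card_erase_of_mem (Finset.mem_univ _), Finset.card_univ]
            congr 1
            have h1c : 1 ≤ Fintype.card (L ≃ₐ[F] L) := Fintype.card_pos
            push_cast [Nat.cast_sub h1c]
            ring
    have hA : 0 < v (algebraMap F L (g σ1)) * v (x ^ m) := mul_pos hvg1 hvy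
    set B := v (algebraMap F L (g σ1)) with hB
    set Y := v (x ^ m) with hY
    set c := (Fintype.card (L ≃ₐ[F] L) : ℝ) with hc
    set n := (Module.finrank K L : ℝ) with hnn
    have e : (c - 1) * (B * (Y / n)) = (c - 1) * (B * Y) / n := by ring
    rw [e] at hbound
    have h3 : (c - 1) * (B * Y) ≤ (n - 1) * (B * Y) :=
      mul_le_mul_of_nonneg_right (by linarith) hA.le
    have h4 : (c - 1) * (B * Y) / n ≤ (n - 1) * (B * Y) / n :=
      (div_le_div_iff_of_pos_right hn0).mpr h3
    have h5 : (n - 1) * (B * Y) / n = B * Y - B * Y / n := by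
      field_simp
    have h6 : 0 < B * Y / n := div_pos hA hn0
    linarith
  have hcard : Fintype.card (L ≃ₐ[F] L) = Module.finrank F L :=
    Nat.card_eq_fintype_card.symm.trans (IsGalois.card_aut_eq_finrank F L)
  exact ⟨hli.span_eq_top_of_card_eq_finrank hcard, hli⟩
end
end

section
/- Let L/K be a finite abelian extension of degree n ≥ 2 with Galois group G, and let |·| be a nonarchimedean absolute value on L. If x ∈ L satisfies |x^γ / x| < 1 for all γ ∈ G \ {Id}, then for every positive integer t, the element x^t is completely normal in L/K. -/
noncomputable section

/-- nonarch sum bound -/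
lemma nonarch_sum_lt {L : Type*} [Field L] (v : AbsoluteValue L ℝ)
    (hna : ∀ a b : L, v (a + b) ≤ max (v a) (v b))
    {ι : Type*} (s : Finset ι) (f : ι → L) {c : ℝ} (hc : 0 < c)
    (h : ∀ i ∈ s, v (f i) < c) : v (∑ i ∈ s, f i) < c := by
  classical
  induction s using Finset.induction_on with
  | empty => simpa using hc
  | @insert a s' hx ih =>
    rw [Finset.sum_insert hx]
    refine lt_of_le_of_lt (hna _ _) (max_lt (h a (Finset.mem_insert_self a s')) ?_)
    exact ih fun i hi => h i (Finset.mem_insert_of_mem hi)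

theorem isNormal_aux {F L : Type*} [Field F] [Field L] [Algebra F L]
    [FiniteDimensional F L] [IsGalois F L]
    (v : AbsoluteValue L ℝ)
    (hna : ∀ a b : L, v (a + b) ≤ max (v a) (v b))
    (y : L) (hy : y ≠ 0)
    (h : ∀ γ : L ≃ₐ[F] L, γ ≠ 1 → v (γ y) < v y) :
    Submodule.span F (Set.range fun γ : L ≃ₐ[F] L => γ y) = ⊤ ∧
      LinearIndependent F fun γ : L ≃ₐ[F] L => γ y := by
  classical
  set G := L ≃ₐ[F] L
  have hvy : 0 < v y := v.pos hy
  set M : Matrix G G L := fun σ δ => σ (δ y) with hM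
  have hMapp : ∀ σ δ : G, M σ δ = (σ * δ) y := fun σ δ => rfl
  -- determinant is nonzero
  set π₀ : Equiv.Perm G := Equiv.inv G with hπ₀
  have hvs : ∀ (π : Equiv.Perm G) (a : L), v (Equiv.Perm.sign π • a) = v a := by
    intro π a
    rcases Int.units_eq_one_or (Equiv.Perm.sign π) with hs | hs <;>
      simp [hs, Units.smul_def]
  have hvprod : ∀ π : Equiv.Perm G,
      v (∏ σ : G, M (π σ) σ) = ∏ σ : G, v ((π σ * σ) y) := by
    intro π
    exact map_prod v.toMonoidHom _ _
  have hle : ∀ γ : G, v (γ y) ≤ v y := by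
    intro γ
    rcases eq_or_ne γ 1 with h1 | h1
    · exact le_of_eq (by rw [h1]; rfl)
    · exact (h γ h1).le
  have key : ∀ π : Equiv.Perm G, π ≠ π₀ →
      v (Equiv.Perm.sign π • ∏ σ : G, M (π σ) σ) < v y ^ Fintype.card G := by
    intro π hπ
    rw [hvs, hvprod, ← Finset.card_univ, ← Finset.prod_const]
    have : ∃ σ₀ : G, π σ₀ ≠ σ₀⁻¹ := by
      by_contra hc
      push_neg at hc
      exact hπ (Equiv.ext fun σ => by rw [hc σ]; rfl)
    obtain ⟨σ₀, hσ₀⟩ := this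
    refine Finset.prod_lt_prod (fun σ _ => v.pos ?_) (fun σ _ => hle _) ?_
    · exact fun hz => hy ((π σ * σ).toEquiv.injective (by simpa using hz))
    · refine ⟨σ₀, Finset.mem_univ _, h _ ?_⟩
      intro hone
      exact hσ₀ (eq_inv_of_mul_eq_one_left hone)
  have hdet : M.det ≠ 0 := by
    intro h0
    have hsplit : M.det = (Equiv.Perm.sign π₀ • ∏ σ : G, M (π₀ σ) σ) +
        ∑ π ∈ Finset.univ.erase π₀, Equiv.Perm.sign π • ∏ σ : G, M (π σ) σ := by
      rw [Matrix.det_apply, ← Finset.add_sum_erase _ _ (Finset.mem_univ π₀)]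
    have hrest : v (∑ π ∈ Finset.univ.erase π₀,
        Equiv.Perm.sign π • ∏ σ : G, M (π σ) σ) < v y ^ Fintype.card G := by
      refine nonarch_sum_lt v hna _ _ (pow_pos hvy _) ?_
      intro π hπ
      exact key π (Finset.ne_of_mem_erase hπ)
    have hmain : v (Equiv.Perm.sign π₀ • ∏ σ : G, M (π₀ σ) σ) = v y ^ Fintype.card G := by
      rw [hvs, hvprod]
      have : ∀ σ : G, (π₀ σ * σ) y = y := by
        intro σ
        have : π₀ σ * σ = 1 := by
          simp [hπ₀, Equiv.inv]
        rw [this]; rfl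
      simp [this, Finset.prod_const]
    rw [h0] at hsplit
    have heq : Equiv.Perm.sign π₀ • ∏ σ : G, M (π₀ σ) σ =
        -(∑ π ∈ Finset.univ.erase π₀, Equiv.Perm.sign π • ∏ σ : G, M (π σ) σ) := by
      exact eq_neg_of_add_eq_zero_left hsplit.symm
    rw [heq, v.map_neg] at hmain
    rw [hmain] at hrest
    exact lt_irrefl _ hrest
  have hli : LinearIndependent F fun γ : G => γ y := by
    rw [Fintype.linearIndependent_iff]
    intro g hg δ
    have hmv : M.mulVec (fun δ => algebraMap F L (g δ)) = 0 := by
      funext σ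
      have := congrArg σ hg
      simp only [map_sum, map_smul, map_zero] at this
      simpa [Matrix.mulVec, dotProduct, Algebra.smul_def, mul_comm] using this
    have hinv := Matrix.nonsing_inv_mul M (isUnit_iff_ne_zero.mpr hdet)
    have hz : (fun δ => algebraMap F L (g δ)) = 0 := by
      calc (fun δ => algebraMap F L (g δ))
          = (1 : Matrix G G L).mulVec (fun δ => algebraMap F L (g δ)) := by
            simp [Matrix.one_mulVec]
        _ = (M⁻¹ * M).mulVec (fun δ => algebraMap F L (g δ)) := by rw [hinv]
        _ = M⁻¹.mulVec (M.mulVec (fun δ => algebraMap F L (g δ))) := by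
            rw [← Matrix.mulVec_mulVec]
        _ = 0 := by rw [hmv]; simp
    exact (algebraMap F L).injective (by simpa using congrFun hz δ)
  refine ⟨?_, hli⟩
  exact hli.span_eq_top_of_card_eq_finrank (by rw [← Nat.card_eq_fintype_card]; exact IsGalois.card_aut_eq_finrank F L)

theorem pow_completelyNormal_of_nonarch
    {K L : Type*} [Field K] [Field L] [Algebra K L]
    [FiniteDimensional K L] [IsGalois K L]
    (hn : 2 ≤ Module.finrank K L)
    (hab : ∀ γ δ : L ≃ₐ[K] L, γ * δ = δ * γ)
    (v : AbsoluteValue L ℝ)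
    (hna : ∀ a b : L, v (a + b) ≤ max (v a) (v b))
    (x : L) (hx : x ≠ 0)
    (h1 : ∀ γ : L ≃ₐ[K] L, γ ≠ 1 → v (γ x / x) < 1) :
    ∀ t : ℕ, 0 < t → IsCompletelyNormal K (x ^ t) := by
  intro t ht F
  have hy : x ^ t ≠ 0 := pow_ne_zero t hx
  refine isNormal_aux v hna (x ^ t) hy ?_
  intro γ hγ
  have hγ' : (AlgEquiv.restrictScalars K γ : L ≃ₐ[K] L) ≠ 1 := by
    intro hc
    apply hγ
    apply AlgEquiv.restrictScalars_injective K
    rw [hc]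
    rfl
  have hx1 := h1 _ hγ'
  have hvx : v (γ x) < v x := by
    rw [AlgEquiv.restrictScalars_apply, map_div₀, div_lt_one (v.pos hx)] at hx1
    exact hx1
  calc v (γ (x ^ t)) = v (γ x) ^ t := by rw [map_pow, v.map_pow]
    _ < v x ^ t := pow_lt_pow_left₀ hvx (v.nonneg _) ht.ne'
    _ = v (x ^ t) := (v.map_pow x t).symm
end
end

section
/- Let L/K be an abelian extension of number fields with Galois group G, and let x ∈ L be an algebraic integer such that L = K(x) and all conjugates x^γ (γ ∈ G) are real (under a fixed embedding of L into ℂ). Let a, b be nonzero integers with |a/b| > 2. Then the complex absolute values |a x^γ + b| for γ ∈ G are pairwise distinct. -/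
noncomputable section

theorem abs_values_pairwise_distinct
    {K L : Type*} [Field K] [NumberField K] [Field L] [NumberField L]
    [Algebra K L] [IsGalois K L]
    (hab : ∀ γ δ : L ≃ₐ[K] L, γ * δ = δ * γ)
    (ι : L →+* ℂ)
    (x : L) (hint : IsIntegral ℤ x)
    (hgen : IntermediateField.adjoin K {x} = ⊤)
    (hreal : ∀ γ : L ≃ₐ[K] L, (ι (γ x)).im = 0)
    (a b : ℤ) (ha : a ≠ 0) (hb : b ≠ 0) (habs : 2 * |b| < |a|) :
    ∀ γ δ : L ≃ₐ[K] L, γ ≠ δ →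
      ‖(a : ℂ) * ι (γ x) + (b : ℂ)‖ ≠
        ‖(a : ℂ) * ι (δ x) + (b : ℂ)‖ := by
  intro γ δ hne heq
  have hr := hreal γ
  have hs := hreal δ
  set r : ℂ := ι (γ x) with hrdef
  set s : ℂ := ι (δ x) with hsdef
  have h1 : (a : ℂ) * r + b = ((a * r.re + b : ℝ) : ℂ) := by
    apply Complex.ext <;> simp [hr]
  have h2 : (a : ℂ) * s + b = ((a * s.re + b : ℝ) : ℂ) := by
    apply Complex.ext <;> simp [hs]
  rw [h1, h2, Complex.norm_real, Complex.norm_real, Real.norm_eq_abs, Real.norm_eq_abs] at heq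
  have haR : (a : ℝ) ≠ 0 := Int.cast_ne_zero.mpr ha
  rcases abs_eq_abs.mp heq with h | h
  · -- r.re = s.re so γ x = δ x, contradiction with γ ≠ δ
    have hre : r.re = s.re := mul_left_cancel₀ haR (by linarith)
    have hrs : r = s := Complex.ext hre (by rw [hr, hs])
    have hxx : γ x = δ x := ι.injective hrs
    apply hne
    have hxint : IsIntegral K x := hint.tower_top
    have hadj : Algebra.adjoin K {x} = ⊤ := by
      have h' := IntermediateField.adjoin_simple_toSubalgebra_of_isAlgebraic hxint.isAlgebraic
      rw [hgen] at h'
      exact h'.symm.trans rfl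
    have : (γ : L →ₐ[K] L) = (δ : L →ₐ[K] L) :=
      AlgHom.ext_of_adjoin_eq_top hadj (fun y hy => by
        rw [Set.mem_singleton_iff] at hy; subst hy; exact hxx)
    exact AlgEquiv.coe_algHom_injective this
  · -- a*(r.re + s.re) + 2*b = 0
    have hmap : ι ((a : L) * (γ x + δ x) + 2 * b) = (a : ℂ) * (r + s) + 2 * b := by
      push_cast [map_add, map_mul, map_intCast, map_ofNat]
      rw [← hrdef, ← hsdef]
    have hsum : (a : L) * (γ x + δ x) + 2 * b = 0 := by
      apply ι.injective
      rw [map_zero, hmap]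
      apply Complex.ext
      · simp only [Complex.add_re, Complex.mul_re, Complex.add_im, Complex.zero_re]
        simp [hr, hs]
        linarith
      · simp [hr, hs]
    have haL : (a : L) ≠ 0 := Int.cast_ne_zero.mpr ha
    have haQ : (a : ℚ) ≠ 0 := Int.cast_ne_zero.mpr ha
    set q : ℚ := (-2 * b : ℚ) / a with hq
    have hq2 : (a : ℚ) * q = -2 * b := by rw [hq]; field_simp
    have hy : γ x + δ x = algebraMap ℚ L q := by
      apply mul_left_cancel₀ haL
      have h3 : (a : L) * algebraMap ℚ L q = -2 * b := by
        have h4 : algebraMap ℚ L ((a : ℚ) * q) = algebraMap ℚ L ((-2 * b : ℚ)) := by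
          rw [hq2]
        rw [map_mul, map_intCast] at h4
        rw [h4]
        simp only [map_neg, map_mul, map_intCast, map_ofNat]
      rw [h3]
      linear_combination hsum
    have hyint : IsIntegral ℤ (γ x + δ x) := by
      have hγ : IsIntegral ℤ (γ x) :=
        hint.map ((γ : L →ₐ[K] L).restrictScalars ℤ)
      have hδ : IsIntegral ℤ (δ x) :=
        hint.map ((δ : L →ₐ[K] L).restrictScalars ℤ)
      exact hγ.add hδ
    rw [hy] at hyint
    have hqint : IsIntegral ℤ q :=
      (isIntegral_algebraMap_iff (algebraMap ℚ L).injective).mp hyint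
    obtain ⟨z, hz⟩ := IsIntegrallyClosed.isIntegral_iff.mp hqint
    have haz : a * z = -2 * b := by
      have h5 : ((a * z : ℤ) : ℚ) = ((-2 * b : ℤ) : ℚ) := by
        have hz' : (z : ℚ) = q := by exact_mod_cast hz
        push_cast
        rw [hz']
        exact hq2
      exact_mod_cast h5
    have hdvd : a ∣ 2 * b := ⟨-z, by linarith [haz]⟩
    have h2b : (2 : ℤ) * b ≠ 0 := mul_ne_zero two_ne_zero hb
    have hle : |a| ≤ |2 * b| :=
      Int.le_of_dvd (abs_pos.mpr h2b) ((abs_dvd _ _).mpr ((dvd_abs _ _).mpr hdvd))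
    rw [abs_mul] at hle
    simp at hle
    linarith
end
end

section
/- Let L/K be an abelian extension of number fields, and x ∈ L an algebraic integer with L = K(x) such that all Galois conjugates of x are real. Let a, b be nonzero integers with |a/b| > 2. Then there exists a positive integer m such that (a x + b)^m is completely normal in L/K. -/
noncomputable section

open Finset IntermediateField

private lemma algEquiv_ext_of_adjoin_eq_top {K L : Type*} [Field K] [Field L] [Algebra K L]
    {S : Set L} (hS : IntermediateField.adjoin K S = ⊤) {γ δ : L ≃ₐ[K] L}
    (h : ∀ z ∈ S, γ z = δ z) : γ = δ := by
  let E : IntermediateField K L :=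
  { carrier := {l | γ l = δ l}
    mul_mem' := fun {p q} hp hq => by
      simp only [Set.mem_setOf_eq, map_mul] at *; rw [hp, hq]
    one_mem' := by simp
    add_mem' := fun {p q} hp hq => by
      simp only [Set.mem_setOf_eq, map_add] at *; rw [hp, hq]
    zero_mem' := by simp
    algebraMap_mem' := fun r => by simp
    inv_mem' := fun p hp => by
      simp only [Set.mem_setOf_eq, map_inv₀] at *; rw [hp] }
  have hle : IntermediateField.adjoin K S ≤ E := IntermediateField.adjoin_le_iff.mpr h
  rw [hS] at hle
  exact AlgEquiv.ext fun l => hle (IntermediateField.mem_top (x := l))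

private lemma no_small_int {L : Type*} [Field L] [CharZero L] {a c : ℤ} (hc : c ≠ 0)
    (hlt : |c| < |a|) {u : L} (hu : IsIntegral ℤ u) (h : (a : L) * u + (c : L) = 0) : False := by
  have ha : a ≠ 0 := by
    rintro rfl
    simp only [abs_zero] at hlt
    exact absurd (abs_nonneg c) (not_le.mpr hlt)
  have haL : (a : L) ≠ 0 := Int.cast_ne_zero.mpr ha
  have haQ : (a : ℚ) ≠ 0 := Int.cast_ne_zero.mpr ha
  have hu' : u = algebraMap ℚ L (-(c : ℚ) / (a : ℚ)) := by
    rw [map_div₀, map_neg, map_intCast, map_intCast, eq_div_iff haL]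
    linear_combination h
  have hint : IsIntegral ℤ (-(c : ℚ) / (a : ℚ)) := by
    have := hu
    rw [hu'] at this
    exact (isIntegral_algebraMap_iff (algebraMap ℚ L).injective).mp this
  obtain ⟨n, hn⟩ := IsIntegrallyClosed.isIntegral_iff.mp hint
  have hnq : (n : ℚ) * (a : ℚ) = -(c : ℚ) := by
    rw [eq_div_iff haQ, algebraMap_int_eq, eq_intCast] at hn
    exact_mod_cast hn
  have hnz : n * a = -c := by exact_mod_cast hnq
  have hn0 : n ≠ 0 := by
    rintro rfl
    rw [zero_mul] at hnz
    omega
  have : |a| ≤ |c| := by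
    calc |a| = 1 * |a| := (one_mul _).symm
    _ ≤ |n| * |a| := by
        apply mul_le_mul_of_nonneg_right _ (abs_nonneg a)
        exact Int.one_le_abs hn0
    _ = |n * a| := (abs_mul n a).symm
    _ = |c| := by rw [hnz, abs_neg]
  exact absurd hlt (not_lt.mpr this)

set_option maxHeartbeats 1600000 in
theorem exists_pow_completelyNormal
    {K L : Type*} [Field K] [NumberField K] [Field L] [NumberField L]
    [Algebra K L] [IsGalois K L]
    (hab : ∀ γ δ : L ≃ₐ[K] L, γ * δ = δ * γ)
    (ι : L →+* ℂ)
    (x : L) (hint : IsIntegral ℤ x)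
    (hgen : IntermediateField.adjoin K {x} = ⊤)
    (hreal : ∀ γ : L ≃ₐ[K] L, (ι (γ x)).im = 0)
    (a b : ℤ) (ha : a ≠ 0) (hb : b ≠ 0) (habs : 2 * |b| < |a|) :
    ∃ m : ℕ, 0 < m ∧ IsCompletelyNormal K (((a : L) * x + (b : L)) ^ m) := by
  classical
  have hι : Function.Injective ι := ι.injective
  set z : L := (a : L) * x + (b : L) with hzdef
  have haL : (a : L) ≠ 0 := Int.cast_ne_zero.mpr ha
  -- conjugates of x are integral
  have hconj_int : ∀ γ : L ≃ₐ[K] L, IsIntegral ℤ (γ x) := by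
    intro γ
    exact hint.map (γ : L ≃ₐ[K] L).toRingEquiv.toRingHom.toIntAlgHom
  -- z generates L over K
  have hgenz : IntermediateField.adjoin K {z} = ⊤ := by
    have hzmem : z ∈ IntermediateField.adjoin K {z} :=
      IntermediateField.subset_adjoin K {z} rfl
    have hxmem : x ∈ IntermediateField.adjoin K {z} := by
      have hamem : ((a : L)) ∈ IntermediateField.adjoin K {z} := by
        exact_mod_cast intCast_mem (IntermediateField.adjoin K {z}) a
      have hbmem : ((b : L)) ∈ IntermediateField.adjoin K {z} := by
        exact_mod_cast intCast_mem (IntermediateField.adjoin K {z}) b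
      have : (z - (b : L)) / (a : L) ∈ IntermediateField.adjoin K {z} :=
        div_mem (sub_mem hzmem hbmem) hamem
      have hx : (z - (b : L)) / (a : L) = x := by
        field_simp [hzdef]
        rw [hzdef]; ring
      rwa [hx] at this
    have hle : IntermediateField.adjoin K {x} ≤ IntermediateField.adjoin K {z} :=
      IntermediateField.adjoin_le_iff.mpr (Set.singleton_subset_iff.mpr hxmem)
    rw [hgen] at hle
    exact top_le_iff.mp hle
  -- injectivity of γ ↦ γ z
  have hzinj : ∀ γ δ : L ≃ₐ[K] L, γ z = δ z → γ = δ := by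
    intro γ δ h
    refine algEquiv_ext_of_adjoin_eq_top hgenz (fun w hw => ?_)
    rw [Set.mem_singleton_iff] at hw; subst hw; exact h
  -- real conjugate values
  have hγz : ∀ γ : L ≃ₐ[K] L, γ z = (a : L) * γ x + (b : L) := by
    intro γ
    simp [hzdef, map_add, map_mul, map_intCast]
  set r : (L ≃ₐ[K] L) → ℝ := fun γ => (ι (γ x)).re with hrdef
  have hιx : ∀ γ : L ≃ₐ[K] L, ι (γ x) = ((r γ : ℝ) : ℂ) := by
    intro γ
    apply Complex.ext
    · simp [hrdef]
    · simp [hreal γ, hrdef]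
  set s : (L ≃ₐ[K] L) → ℝ := fun γ => a * r γ + b with hsdef
  have hs : ∀ γ : L ≃ₐ[K] L, ι (γ z) = ((s γ : ℝ) : ℂ) := by
    intro γ
    rw [hγz γ]
    push_cast [map_add, map_mul, map_intCast, hιx γ, hsdef]
    ring
  -- s values nonzero
  have hs0 : ∀ γ : L ≃ₐ[K] L, s γ ≠ 0 := by
    intro γ h0
    have h1 : ι (γ z) = ι 0 := by rw [hs γ, h0]; simp
    have h2 : γ z = 0 := hι h1
    rw [hγz γ] at h2
    exact no_small_int hb (by linarith [abs_nonneg b, abs_pos.mpr hb]) (hconj_int γ) h2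
  -- no two s values opposite
  have hsum0 : ∀ γ δ : L ≃ₐ[K] L, s γ + s δ ≠ 0 := by
    intro γ δ h0
    have h1 : ι (γ z + δ z) = ι 0 := by
      rw [map_add, hs γ, hs δ, map_zero, ← Complex.ofReal_add, h0, Complex.ofReal_zero]
    have h2 : γ z + δ z = 0 := hι h1
    rw [hγz γ, hγz δ] at h2
    have h3 : (a : L) * (γ x + δ x) + ((2 * b : ℤ) : L) = 0 := by
      push_cast
      linear_combination h2
    refine no_small_int (mul_ne_zero two_ne_zero hb) ?_ ((hconj_int γ).add (hconj_int δ)) h3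
    rwa [abs_mul, abs_two]
  -- distinct absolute values
  have habs_ne : ∀ γ δ : L ≃ₐ[K] L, γ ≠ δ → |s γ| ≠ |s δ| := by
    intro γ δ hne heq
    rcases abs_eq_abs.mp heq with h | h
    · apply hne
      apply hzinj
      apply hι
      rw [hs γ, hs δ, h]
    · exact hsum0 γ δ (by linarith)
  -- choose m
  obtain ⟨m, hm1, hmlt⟩ : ∃ m : ℕ, 1 ≤ m ∧
      (∑ p ∈ (univ : Finset ((L ≃ₐ[K] L) × (L ≃ₐ[K] L))).filter
        (fun p => |s p.1| < |s p.2|), (|s p.1| / |s p.2|) ^ m) < 1 := by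
    set D := (univ : Finset ((L ≃ₐ[K] L) × (L ≃ₐ[K] L))).filter
        (fun p => |s p.1| < |s p.2|) with hD
    have htend : Filter.Tendsto
        (fun m : ℕ => ∑ p ∈ D, (|s p.1| / |s p.2|) ^ m) Filter.atTop (nhds 0) := by
      have h0 : (0 : ℝ) = ∑ _p ∈ D, (0 : ℝ) := by simp
      rw [h0]
      refine tendsto_finset_sum D (fun p hp => ?_)
      rw [hD, mem_filter] at hp
      refine tendsto_pow_atTop_nhds_zero_of_lt_one
        (div_nonneg (abs_nonneg _) (abs_nonneg _)) ?_
      rw [div_lt_one (lt_of_le_of_lt (abs_nonneg _) hp.2)]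
      exact hp.2
    have hev : ∀ᶠ m : ℕ in Filter.atTop,
        (∑ p ∈ D, (|s p.1| / |s p.2|) ^ m) < 1 :=
      htend.eventually (gt_mem_nhds one_pos)
    obtain ⟨m, hm⟩ := (hev.and (Filter.eventually_ge_atTop 1)).exists
    exact ⟨m, hm.2, hm.1⟩
  -- the key estimate
  have key_est : ∀ γ : L ≃ₐ[K] L, ∀ T : Finset (L ≃ₐ[K] L),
      (∀ δ ∈ T, |s δ| < |s γ|) → (∑ δ ∈ T, |s δ| ^ m) < |s γ| ^ m := by
    intro γ T hT
    have hpos : (0 : ℝ) < |s γ| ^ m := pow_pos (abs_pos.mpr (hs0 γ)) m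
    have h1 : (∑ δ ∈ T, |s δ| ^ m) = (∑ δ ∈ T, (|s δ| / |s γ|) ^ m) * |s γ| ^ m := by
      rw [Finset.sum_mul]
      refine Finset.sum_congr rfl (fun δ _ => ?_)
      rw [div_pow, div_mul_cancel₀ _ (ne_of_gt hpos)]
    rw [h1]
    have h2 : (∑ δ ∈ T, (|s δ| / |s γ|) ^ m)
        ≤ ∑ p ∈ (univ : Finset ((L ≃ₐ[K] L) × (L ≃ₐ[K] L))).filter
          (fun p => |s p.1| < |s p.2|), (|s p.1| / |s p.2|) ^ m := by
      have himg : (∑ δ ∈ T, (|s δ| / |s γ|) ^ m)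
          = ∑ p ∈ T.image (fun δ => (δ, γ)), (|s p.1| / |s p.2|) ^ m := by
        rw [Finset.sum_image (fun p _ q _ h => (Prod.ext_iff.mp h).1)]
      rw [himg]
      refine Finset.sum_le_sum_of_subset_of_nonneg ?_ (fun p _ _ =>
        pow_nonneg (div_nonneg (abs_nonneg _) (abs_nonneg _)) m)
      intro p hp
      rw [Finset.mem_image] at hp
      obtain ⟨δ, hδ, rfl⟩ := hp
      exact mem_filter.mpr ⟨mem_univ _, hT δ hδ⟩
    calc (∑ δ ∈ T, (|s δ| / |s γ|) ^ m) * |s γ| ^ m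
        ≤ _ * |s γ| ^ m := mul_le_mul_of_nonneg_right h2 (le_of_lt hpos)
      _ < 1 * |s γ| ^ m := mul_lt_mul_of_pos_right hmlt hpos
      _ = |s γ| ^ m := one_mul _
  refine ⟨m, hm1, ?_⟩
  intro F
  -- restriction of automorphisms
  let ρ : (L ≃ₐ[F] L) → (L ≃ₐ[K] L) := AlgEquiv.restrictScalars K
  have hρinj : Function.Injective ρ := AlgEquiv.restrictScalars_injective K
  have hρapp : ∀ (h : L ≃ₐ[F] L) (l : L), ρ h l = h l := fun _ _ => rfl
  have hρmul : ∀ g h : L ≃ₐ[F] L, ρ (g * h) = ρ g * ρ h := fun g h => by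
    ext l; rfl
  letI : CommGroup (L ≃ₐ[F] L) :=
    { (inferInstance : Group (L ≃ₐ[F] L)) with
      mul_comm := fun g h => hρinj (by rw [hρmul, hρmul, hab]) }
  set y : L := z ^ m with hydef
  set w : (L ≃ₐ[F] L) → ℝ := fun h => s (ρ h) with hwdef
  have hw : ∀ h : L ≃ₐ[F] L, ι (h y) = ((w h : ℝ) : ℂ) ^ m := by
    intro h
    rw [hydef, map_pow, map_pow, ← hρapp, hs (ρ h)]
  -- characters
  haveI : NeZero ((Monoid.exponent (L ≃ₐ[F] L) : ℂ)) :=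
    ⟨Nat.cast_ne_zero.mpr Monoid.exponent_ne_zero_of_finite⟩
  obtain ⟨e⟩ := CommGroup.monoidHom_mulEquiv_of_hasEnoughRootsOfUnity (L ≃ₐ[F] L) ℂ
  letI : Fintype ((L ≃ₐ[F] L) →* ℂˣ) := Fintype.ofEquiv _ e.toEquiv.symm
  haveI : Nonempty ((L ≃ₐ[F] L) →* ℂˣ) := ⟨1⟩
  have hcardχ : Fintype.card ((L ≃ₐ[F] L) →* ℂˣ) = Fintype.card (L ≃ₐ[F] L) :=
    Fintype.card_congr e.toEquiv
  have hχnorm : ∀ (χ : (L ≃ₐ[F] L) →* ℂˣ) (h : L ≃ₐ[F] L), ‖((χ h : ℂˣ) : ℂ)‖ = 1 := by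
    intro χ h
    refine Complex.norm_eq_one_of_pow_eq_one
      (n := Fintype.card (L ≃ₐ[F] L)) ?_ Fintype.card_ne_zero
    rw [← Units.val_pow_eq_pow_val, ← map_pow, pow_card_eq_one, map_one, Units.val_one]
  -- the character sums are nonzero
  have hS0 : ∀ χ : (L ≃ₐ[F] L) →* ℂˣ,
      (∑ h : (L ≃ₐ[F] L), ((χ h : ℂˣ) : ℂ) * ((w h : ℝ) : ℂ) ^ m) ≠ 0 := by
    intro χ hS
    obtain ⟨h0, -, hmax⟩ := Finset.exists_max_image (univ : Finset (L ≃ₐ[F] L))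
      (fun h => |w h|) ⟨1, mem_univ 1⟩
    have hsplit : ((χ h0 : ℂˣ) : ℂ) * ((w h0 : ℝ) : ℂ) ^ m
        = - ∑ h ∈ univ.erase h0, ((χ h : ℂˣ) : ℂ) * ((w h : ℝ) : ℂ) ^ m := by
      have h1 := Finset.add_sum_erase univ
        (fun h : (L ≃ₐ[F] L) => ((χ h : ℂˣ) : ℂ) * ((w h : ℝ) : ℂ) ^ m) (mem_univ h0)
      refine eq_neg_of_add_eq_zero_left ?_
      rw [h1]
      exact hS
    have hnorm1 : ‖((χ h0 : ℂˣ) : ℂ) * ((w h0 : ℝ) : ℂ) ^ m‖ = |w h0| ^ m := by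
      rw [norm_mul, hχnorm, one_mul, norm_pow, Complex.norm_real, Real.norm_eq_abs]
    have hnorm2 : ‖∑ h ∈ univ.erase h0, ((χ h : ℂˣ) : ℂ) * ((w h : ℝ) : ℂ) ^ m‖
        ≤ ∑ h ∈ univ.erase h0, |w h| ^ m := by
      refine (norm_sum_le _ _).trans (le_of_eq ?_)
      refine Finset.sum_congr rfl (fun h _ => ?_)
      rw [norm_mul, hχnorm, one_mul, norm_pow, Complex.norm_real, Real.norm_eq_abs]
    have hstrict : (∑ h ∈ univ.erase h0, |w h| ^ m) < |w h0| ^ m := by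
      have himg : (∑ h ∈ univ.erase h0, |w h| ^ m)
          = ∑ δ ∈ (univ.erase h0).image ρ, |s δ| ^ m := by
        rw [Finset.sum_image (fun p _ q _ h => hρinj h)]
      rw [himg]
      refine key_est (ρ h0) _ (fun δ hδ => ?_)
      rw [Finset.mem_image] at hδ
      obtain ⟨h, hh, rfl⟩ := hδ
      have hne : h ≠ h0 := (Finset.mem_erase.mp hh).1
      exact lt_of_le_of_ne (hmax h (mem_univ h)) (habs_ne (ρ h) (ρ h0) (fun hc => hne (hρinj hc)))
    rw [← hnorm1, hsplit, norm_neg] at hstrict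
    exact absurd hnorm2 (not_le.mpr hstrict)
  -- the group matrix
  let B : Matrix (L ≃ₐ[F] L) (L ≃ₐ[F] L) ℂ := fun σ γ => ι ((σ⁻¹ * γ) y)
  have hBapp : ∀ σ γ : L ≃ₐ[F] L, B σ γ = ι ((σ⁻¹ * γ) y) := fun _ _ => rfl
  have hBv : ∀ χ : (L ≃ₐ[F] L) →* ℂˣ,
      B.mulVec (fun γ => ((χ γ : ℂˣ) : ℂ))
        = (∑ h : (L ≃ₐ[F] L), ((χ h : ℂˣ) : ℂ) * ((w h : ℝ) : ℂ) ^ m)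
            • (fun γ => ((χ γ : ℂˣ) : ℂ)) := by
    intro χ
    funext σ
    have hstep : ∀ hh : L ≃ₐ[F] L,
        ((χ σ : ℂˣ) : ℂ) * (((χ hh : ℂˣ) : ℂ) * ((w hh : ℝ) : ℂ) ^ m)
          = B σ ((Equiv.mulLeft σ) hh) * ((χ ((Equiv.mulLeft σ) hh) : ℂˣ) : ℂ) := by
      intro hh
      rw [hBapp, Equiv.coe_mulLeft, inv_mul_cancel_left, hw hh, map_mul, Units.val_mul]
      ring
    calc B.mulVec (fun γ => ((χ γ : ℂˣ) : ℂ)) σ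
        = ∑ γ : (L ≃ₐ[F] L), B σ γ * ((χ γ : ℂˣ) : ℂ) := by
          simp [Matrix.mulVec, dotProduct]
      _ = ∑ hh : (L ≃ₐ[F] L),
            ((χ σ : ℂˣ) : ℂ) * (((χ hh : ℂˣ) : ℂ) * ((w hh : ℝ) : ℂ) ^ m) :=
          (Fintype.sum_equiv (Equiv.mulLeft σ) _ _ hstep).symm
      _ = ((∑ h : (L ≃ₐ[F] L), ((χ h : ℂˣ) : ℂ) * ((w h : ℝ) : ℂ) ^ m)
            • (fun γ => ((χ γ : ℂˣ) : ℂ))) σ := by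
          rw [← Finset.mul_sum, Pi.smul_apply, smul_eq_mul, mul_comm]
  -- the matrix is invertible
  have hsurj : Function.Surjective B.mulVecLin := by
    rw [← LinearMap.range_eq_top]
    apply top_unique
    have hli : LinearIndependent ℂ (fun χ : (L ≃ₐ[F] L) →* ℂˣ =>
        (fun γ => ((χ γ : ℂˣ) : ℂ))) := by
      have base := linearIndependent_monoidHom (L ≃ₐ[F] L) ℂ
      have hcomp : Function.Injective (fun χ : (L ≃ₐ[F] L) →* ℂˣ =>
          (Units.coeHom ℂ).comp χ) := by
        intro χ χ' hh
        ext γ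
        exact DFunLike.congr_fun hh γ
      exact base.comp _ hcomp
    have hspanχ : Submodule.span ℂ (Set.range (fun χ : (L ≃ₐ[F] L) →* ℂˣ =>
        (fun γ => ((χ γ : ℂˣ) : ℂ)))) = ⊤ := by
      refine LinearIndependent.span_eq_top_of_card_eq_finrank hli ?_
      rw [Module.finrank_pi, hcardχ]
    rw [← hspanχ]
    refine Submodule.span_le.mpr ?_
    rintro _ ⟨χ, rfl⟩
    refine ⟨(∑ h : (L ≃ₐ[F] L), ((χ h : ℂˣ) : ℂ) * ((w h : ℝ) : ℂ) ^ m)⁻¹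
      • (fun γ => ((χ γ : ℂˣ) : ℂ)), ?_⟩
    rw [Matrix.mulVecLin_apply, Matrix.mulVec_smul, hBv χ, smul_smul,
      inv_mul_cancel₀ (hS0 χ), one_smul]
  have hinjB : Function.Injective B.mulVecLin := LinearMap.injective_iff_surjective.mpr hsurj
  -- linear independence of the conjugates over F
  have hliF : LinearIndependent F (fun γ : L ≃ₐ[F] L => γ y) := by
    rw [Fintype.linearIndependent_iff]
    intro g hgsum γ0
    set u : (L ≃ₐ[F] L) → ℂ := fun γ => ι (algebraMap F L (g γ)) with hudef
    have hBu : B.mulVec u = 0 := by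
      funext σ
      have hterm : ∀ γ : L ≃ₐ[F] L, B σ γ * u γ = ι (σ⁻¹ (g γ • γ y)) := by
        intro γ
        rw [hBapp, hudef, show σ⁻¹ (g γ • γ y) = g γ • σ⁻¹ (γ y) from by
          rw [Algebra.smul_def, Algebra.smul_def, map_mul, AlgEquiv.commutes], Algebra.smul_def, map_mul, AlgEquiv.mul_apply]
        ring
      calc B.mulVec u σ = ∑ γ : (L ≃ₐ[F] L), B σ γ * u γ := by
            simp [Matrix.mulVec, dotProduct]
        _ = ∑ γ : (L ≃ₐ[F] L), ι (σ⁻¹ (g γ • γ y)) :=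
            Finset.sum_congr rfl (fun γ _ => hterm γ)
        _ = ι (σ⁻¹ (∑ γ : (L ≃ₐ[F] L), g γ • γ y)) := by rw [map_sum, map_sum]
        _ = (0 : (L ≃ₐ[F] L) → ℂ) σ := by rw [hgsum, map_zero, map_zero]; simp
    have hu0 : u = 0 := by
      apply hinjB
      rw [map_zero, Matrix.mulVecLin_apply, hBu]
    have h2 : ι (algebraMap F L (g γ0)) = ι (algebraMap F L 0) := by
      have := congr_fun hu0 γ0
      rw [hudef] at this
      simpa using this
    exact (algebraMap F L).injective (hι h2)
  have hcard : Fintype.card (L ≃ₐ[F] L) = Module.finrank F L :=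
    by rw [← Nat.card_eq_fintype_card]; exact IsGalois.card_aut_eq_finrank F L
  exact ⟨LinearIndependent.span_eq_top_of_card_eq_finrank hliF hcard, hliF⟩
end
end

section
/- Let ℓ be a positive integer not in {1,2,3,4,6}. For every integer t with gcd(t, ℓ) = 1 and 1 < t ≤ ⌊ℓ/2⌋, one has 0 < (cos(2tπ/ℓ) + 1)/(cos(2π/ℓ) + 1) ≤ (cos(4π/ℓ) + 1)/(cos(2π/ℓ) + 1) < 1. -/
open Real

theorem cos_quotient_bounds
    (ℓ : ℕ) (hℓ : 0 < ℓ) (hℓ' : ℓ ∉ ({1, 2, 3, 4, 6} : Set ℕ))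
    (t : ℕ) (hgcd : Nat.gcd t ℓ = 1) (ht1 : 1 < t) (ht2 : t ≤ ℓ / 2) :
    0 < (Real.cos (2 * t * π / ℓ) + 1) / (Real.cos (2 * π / ℓ) + 1) ∧
    (Real.cos (2 * t * π / ℓ) + 1) / (Real.cos (2 * π / ℓ) + 1) ≤
      (Real.cos (4 * π / ℓ) + 1) / (Real.cos (2 * π / ℓ) + 1) ∧
    (Real.cos (4 * π / ℓ) + 1) / (Real.cos (2 * π / ℓ) + 1) < 1 := by
  simp only [Set.mem_insert_iff, Set.mem_singleton_iff, not_or] at hℓ'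
  have h5 : 5 ≤ ℓ := by omega
  have h2t : 2 * t < ℓ := by
    have hle : 2 * t ≤ ℓ := by omega
    rcases lt_or_eq_of_le hle with h | h
    · exact h
    · exfalso
      have : t ∣ ℓ := ⟨2, by omega⟩
      have := Nat.gcd_eq_left this
      omega
  have hL : (5 : ℝ) ≤ (ℓ : ℝ) := by exact_mod_cast h5
  have hL0 : (0 : ℝ) < (ℓ : ℝ) := by linarith
  have hT : (2 * t : ℝ) < (ℓ : ℝ) := by exact_mod_cast h2t
  have hT4 : (4 : ℝ) ≤ (2 * t : ℝ) := by
    have : (2 : ℕ) ≤ t := ht1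
    have : (2 : ℝ) ≤ (t : ℝ) := by exact_mod_cast this
    linarith
  have hpi := Real.pi_pos
  -- angle bounds
  have ha1 : 0 < 2 * π / ℓ := by positivity
  have ha2' : 2 * π / ℓ < 4 * π / ℓ := by
    gcongr
    norm_num
  have ha3 : 4 * π / ℓ ≤ 2 * t * π / ℓ := by
    gcongr
  have ha4 : 2 * t * π / ℓ < π := by
    rw [div_lt_iff₀ hL0]
    nlinarith
  have ha5 : 2 * t * π / ℓ ≤ π := ha4.le
  have ha0 : 0 ≤ 2 * π / ℓ := ha1.le
  -- cos bounds
  have hc1 : Real.cos (2 * t * π / ℓ) ≤ Real.cos (4 * π / ℓ) :=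
    Real.cos_le_cos_of_nonneg_of_le_pi (by positivity) ha5 ha3
  have hc2 : Real.cos (4 * π / ℓ) < Real.cos (2 * π / ℓ) :=
    Real.cos_lt_cos_of_nonneg_of_le_pi ha0 (ha3.trans ha5) ha2'
  have hc3 : (-1 : ℝ) < Real.cos (2 * t * π / ℓ) := by
    have := Real.cos_lt_cos_of_nonneg_of_le_pi (by positivity : (0:ℝ) ≤ 2 * t * π / ℓ)
      (le_refl π) ha4
    rw [Real.cos_pi] at this
    exact this
  have hden : 0 < Real.cos (2 * π / ℓ) + 1 := by
    have := hc3.trans_le (hc1.trans hc2.le)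
    linarith
  have hnum : 0 < Real.cos (2 * t * π / ℓ) + 1 := by linarith
  refine ⟨div_pos hnum hden, ?_, ?_⟩
  · gcongr
  · rw [div_lt_one hden]
    linarith
end

section
/- Let L₁ and L₂ be finite Galois extensions of a number field K with L₁ ∩ L₂ = K. If x₁ ∈ L₁ is normal in L₁/K and x₂ ∈ L₂ is normal in L₂/K, then x₁x₂ is normal in the compositum L₁L₂ over K. -/
noncomputable section

open IntermediateField Pointwise

set_option maxHeartbeats 2000000 in
set_option synthInstance.maxHeartbeats 400000 in
theorem mul_isNormalElement_sup
    {K L : Type*} [Field K] [NumberField K] [Field L] [Algebra K L]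
    (L₁ L₂ : IntermediateField K L)
    [FiniteDimensional K L₁] [FiniteDimensional K L₂]
    [IsGalois K L₁] [IsGalois K L₂]
    (hdisj : L₁ ⊓ L₂ = ⊥)
    (x₁ x₂ : L) (hx₁ : x₁ ∈ L₁) (hx₂ : x₂ ∈ L₂)
    (h₁ : IsNormalElement K (⟨x₁, hx₁⟩ : L₁))
    (h₂ : IsNormalElement K (⟨x₂, hx₂⟩ : L₂)) :
    ∃ y : ↥(L₁ ⊔ L₂), (y : L) = x₁ * x₂ ∧ IsNormalElement K y := by
  letI a1 : Algebra L₁ ↥(L₁ ⊔ L₂) :=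
    (IntermediateField.inclusion (le_sup_left : L₁ ≤ L₁ ⊔ L₂)).toRingHom.toAlgebra
  letI a2 : Algebra L₂ ↥(L₁ ⊔ L₂) :=
    (IntermediateField.inclusion (le_sup_right : L₂ ≤ L₁ ⊔ L₂)).toRingHom.toAlgebra
  haveI t1 : IsScalarTower K L₁ ↥(L₁ ⊔ L₂) := IsScalarTower.of_algebraMap_eq' rfl
  haveI t2 : IsScalarTower K L₂ ↥(L₁ ⊔ L₂) := IsScalarTower.of_algebraMap_eq' rfl
  let π₁ : (↥(L₁ ⊔ L₂) ≃ₐ[K] ↥(L₁ ⊔ L₂)) →* (L₁ ≃ₐ[K] L₁) := AlgEquiv.restrictNormalHom L₁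
  let π₂ : (↥(L₁ ⊔ L₂) ≃ₐ[K] ↥(L₁ ⊔ L₂)) →* (L₂ ≃ₐ[K] L₂) := AlgEquiv.restrictNormalHom L₂
  have hsurj1 : Function.Surjective π₁ := AlgEquiv.restrictNormalHom_surjective ↥(L₁ ⊔ L₂)
  have hcomm1 : ∀ (γ : ↥(L₁ ⊔ L₂) ≃ₐ[K] ↥(L₁ ⊔ L₂)) (z : L₁),
      algebraMap L₁ ↥(L₁ ⊔ L₂) (π₁ γ z) = γ (algebraMap L₁ ↥(L₁ ⊔ L₂) z) := fun γ z =>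
    AlgEquiv.restrictNormal_commutes γ L₁ z
  have hcomm2 : ∀ (γ : ↥(L₁ ⊔ L₂) ≃ₐ[K] ↥(L₁ ⊔ L₂)) (z : L₂),
      algebraMap L₂ ↥(L₁ ⊔ L₂) (π₂ γ z) = γ (algebraMap L₂ ↥(L₁ ⊔ L₂) z) := fun γ z =>
    AlgEquiv.restrictNormal_commutes γ L₂ z
  -- L₁ viewed as an intermediate field of the compositum
  let F₁ : IntermediateField K ↥(L₁ ⊔ L₂) :=
    (IntermediateField.inclusion (le_sup_left : L₁ ≤ L₁ ⊔ L₂)).fieldRange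
  have hker : MonoidHom.ker π₁ = F₁.fixingSubgroup := by
    ext δ
    rw [MonoidHom.mem_ker, IntermediateField.mem_fixingSubgroup_iff]
    constructor
    · rintro h y ⟨z, rfl⟩
      have := hcomm1 δ z
      rw [h] at this
      exact this.symm
    · intro h
      ext z
      have h1 : algebraMap L₁ ↥(L₁ ⊔ L₂) (π₁ δ z) = algebraMap L₁ ↥(L₁ ⊔ L₂) z := by
        rw [hcomm1 δ z]; exact h _ ⟨z, rfl⟩
      exact congrArg (fun w : ↥(L₁ ⊔ L₂) => (w : L)) h1
  -- joint surjectivity of the restriction maps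
  have hjoint : ∀ (σ : L₁ ≃ₐ[K] L₁) (τ : L₂ ≃ₐ[K] L₂), ∃ γ, π₁ γ = σ ∧ π₂ γ = τ := by
    have hG₂ : Subgroup.map π₂ (MonoidHom.ker π₁) = ⊤ := by
      have hff : IntermediateField.fixedField (Subgroup.map π₂ (MonoidHom.ker π₁)) = ⊥ := by
        rw [eq_bot_iff]
        intro x hx
        have hx' : ∀ δ ∈ MonoidHom.ker π₁, π₂ δ x = x := fun δ hδ =>
          hx ⟨π₂ δ, Subgroup.mem_map_of_mem _ hδ⟩
        have hmem : algebraMap L₂ ↥(L₁ ⊔ L₂) x ∈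
            IntermediateField.fixedField (MonoidHom.ker π₁) := by
          rintro ⟨δ, hδ⟩
          show δ (algebraMap L₂ ↥(L₁ ⊔ L₂) x) = algebraMap L₂ ↥(L₁ ⊔ L₂) x
          rw [← hcomm2 δ x, hx' δ hδ]
        rw [hker, IsGalois.fixedField_fixingSubgroup] at hmem
        obtain ⟨z, hz⟩ := hmem
        have hxL : (x : L) ∈ L₁ ⊓ L₂ := by
          constructor
          · have h0 : ((algebraMap L₂ ↥(L₁ ⊔ L₂) x : ↥(L₁ ⊔ L₂)) : L) = (x : L) := rfl
            rw [← h0, ← hz]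
            exact z.2
          · exact x.2
        rw [hdisj, IntermediateField.mem_bot] at hxL
        obtain ⟨k, hk⟩ := hxL
        exact ⟨k, Subtype.ext hk⟩
      have := IntermediateField.fixingSubgroup_fixedField (Subgroup.map π₂ (MonoidHom.ker π₁))
      rw [hff, IntermediateField.fixingSubgroup_bot] at this
      exact this.symm
    intro σ τ
    obtain ⟨γ₀, hγ₀⟩ := hsurj1 σ
    have : τ * (π₂ γ₀)⁻¹ ∈ (⊤ : Subgroup (L₂ ≃ₐ[K] L₂)) := trivial
    rw [← hG₂] at this
    obtain ⟨δ, hδker, hδ⟩ := this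
    refine ⟨δ * γ₀, ?_, ?_⟩
    · rw [map_mul, MonoidHom.mem_ker.mp hδker, hγ₀, one_mul]
    · rw [map_mul, hδ]
      group
  -- the element y and the value of its conjugates
  set b₁ : L₁ := ⟨x₁, hx₁⟩ with hb₁
  set b₂ : L₂ := ⟨x₂, hx₂⟩ with hb₂
  set y : ↥(L₁ ⊔ L₂) := ⟨x₁ * x₂, mul_mem (SetLike.le_def.mp le_sup_left hx₁) (SetLike.le_def.mp le_sup_right hx₂)⟩ with hy
  have hyval : y = algebraMap L₁ ↥(L₁ ⊔ L₂) b₁ * algebraMap L₂ ↥(L₁ ⊔ L₂) b₂ := by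
    apply Subtype.ext; rfl
  have hval : ∀ γ : ↥(L₁ ⊔ L₂) ≃ₐ[K] ↥(L₁ ⊔ L₂),
      ((γ y : ↥(L₁ ⊔ L₂)) : L) = ((π₁ γ b₁ : L₁) : L) * ((π₂ γ b₂ : L₂) : L) := by
    intro γ
    rw [hyval, map_mul, ← hcomm1 γ b₁, ← hcomm2 γ b₂]
    rfl
  -- span computation in L
  have hrange1 : LinearMap.range L₁.val.toLinearMap = Subalgebra.toSubmodule L₁.toSubalgebra := by
    ext w
    exact ⟨fun ⟨z, hz⟩ => hz ▸ z.2, fun hw => ⟨⟨w, hw⟩, rfl⟩⟩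
  have hrange2 : LinearMap.range L₂.val.toLinearMap = Subalgebra.toSubmodule L₂.toSubalgebra := by
    ext w
    exact ⟨fun ⟨z, hz⟩ => hz ▸ z.2, fun hw => ⟨⟨w, hw⟩, rfl⟩⟩
  have hspan1 : Submodule.span K (Set.range fun σ : L₁ ≃ₐ[K] L₁ => ((σ b₁ : L₁) : L))
      = Subalgebra.toSubmodule L₁.toSubalgebra := by
    have := congrArg (Submodule.map L₁.val.toLinearMap) h₁.1
    rw [Submodule.map_span, ← Set.range_comp, Submodule.map_top, hrange1] at this
    exact this
  have hspan2 : Submodule.span K (Set.range fun τ : L₂ ≃ₐ[K] L₂ => ((τ b₂ : L₂) : L))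
      = Subalgebra.toSubmodule L₂.toSubalgebra := by
    have := congrArg (Submodule.map L₂.val.toLinearMap) h₂.1
    rw [Submodule.map_span, ← Set.range_comp, Submodule.map_top, hrange2] at this
    exact this
  have hS : (Set.range fun γ : ↥(L₁ ⊔ L₂) ≃ₐ[K] ↥(L₁ ⊔ L₂) => ((γ y : ↥(L₁ ⊔ L₂)) : L))
      = (Set.range fun σ : L₁ ≃ₐ[K] L₁ => ((σ b₁ : L₁) : L))
        * (Set.range fun τ : L₂ ≃ₐ[K] L₂ => ((τ b₂ : L₂) : L)) := by
    ext w
    constructor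
    · rintro ⟨γ, rfl⟩
      exact ⟨_, ⟨π₁ γ, rfl⟩, _, ⟨π₂ γ, rfl⟩, (hval γ).symm⟩
    · rintro ⟨a, ⟨σ, rfl⟩, b, ⟨τ, rfl⟩, rfl⟩
      obtain ⟨γ, hγ1, hγ2⟩ := hjoint σ τ
      refine ⟨γ, ?_⟩
      show ((γ y : ↥(L₁ ⊔ L₂)) : L) = ((σ b₁ : L₁) : L) * ((τ b₂ : L₂) : L)
      rw [hval γ, hγ1, hγ2]
  have hspanS : Submodule.span K
      (Set.range fun γ : ↥(L₁ ⊔ L₂) ≃ₐ[K] ↥(L₁ ⊔ L₂) => ((γ y : ↥(L₁ ⊔ L₂)) : L))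
      = Subalgebra.toSubmodule (L₁ ⊔ L₂).toSubalgebra := by
    rw [hS, ← Submodule.span_mul_span, hspan1, hspan2, Subalgebra.mul_toSubmodule,
      ← IntermediateField.sup_toSubalgebra_of_left]
  have hrangeS : LinearMap.range (L₁ ⊔ L₂).val.toLinearMap
      = Subalgebra.toSubmodule (L₁ ⊔ L₂).toSubalgebra := by
    ext w
    exact ⟨fun ⟨z, hz⟩ => hz ▸ z.2, fun hw => ⟨⟨w, hw⟩, rfl⟩⟩
  -- the span is everything
  have hspantop : Submodule.span K
      (Set.range fun γ : ↥(L₁ ⊔ L₂) ≃ₐ[K] ↥(L₁ ⊔ L₂) => γ y) = ⊤ := by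
    apply Submodule.map_injective_of_injective
      (f := (L₁ ⊔ L₂).val.toLinearMap) Subtype.val_injective
    rw [Submodule.map_span, ← Set.range_comp, Submodule.map_top, hrangeS]
    exact hspanS
  refine ⟨y, rfl, hspantop, ?_⟩
  letI : Fintype (↥(L₁ ⊔ L₂) ≃ₐ[K] ↥(L₁ ⊔ L₂)) := AlgEquiv.fintype K ↥(L₁ ⊔ L₂)
  exact linearIndependent_of_top_le_span_of_card_eq_finrank hspantop.ge
    (Nat.card_eq_fintype_card.symm.trans (IsGalois.card_aut_eq_finrank K ↥(L₁ ⊔ L₂)))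
end
end
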